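/- Let f, g : (0,∞) → (0,∞) be increasing bijections such that (a) f(x) ≤ g(x) for all x > 0, (b) f is convex, and (c) f(x)/g(x) → 1 as x → ∞. Then f⁻¹(x)/g⁻¹(x) → 1 as x → ∞. -/

import Mathlib

theorem stmt9 (f g f' g' : ℝ → ℝ)
    (hf_mono : StrictMonoOn f (Set.Ioi 0))
    (hg_mono : StrictMonoOn g (Set.Ioi 0))
    (hf_bij : Set.BijOn f (Set.Ioi 0) (Set.Ioi 0))
    (hg_bij : Set.BijOn g (Set.Ioi 0) (Set.Ioi 0))
    (hconv : ConvexOn ℝ (Set.Ioi 0) f)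
    (hle : ∀ x ∈ Set.Ioi (0 : ℝ), f x ≤ g x)
    (hsim : Filter.Tendsto (fun x => f x / g x) Filter.atTop (nhds 1))
    (hf' : ∀ x ∈ Set.Ioi (0 : ℝ), f' x ∈ Set.Ioi (0 : ℝ) ∧ f (f' x) = x)
    (hg' : ∀ x ∈ Set.Ioi (0 : ℝ), g' x ∈ Set.Ioi (0 : ℝ) ∧ g (g' x) = x) :
    Filter.Tendsto (fun x => f' x / g' x) Filter.atTop (nhds 1) := by
  rw [Metric.tendsto_atTop]
  intro ε hε
  set ε' : ℝ := ε / 2 with hε'def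
  have hε'pos : 0 < ε' := by positivity
  set δ : ℝ := ε' / (2 * (1 + ε')) with hδdef
  have hδpos : 0 < δ := by positivity
  obtain ⟨X, hX⟩ := Metric.tendsto_atTop.mp hsim δ hδpos
  set M : ℝ := max X 2 with hMdef
  have hM0 : (0:ℝ) < M := lt_of_lt_of_le two_pos (le_max_right _ _)
  have hMmem : M ∈ Set.Ioi (0:ℝ) := hM0
  have hgM : 0 < g M := hg_bij.mapsTo hMmem
  have h1mem : (1:ℝ) ∈ Set.Ioi (0:ℝ) := by norm_num
  have hf1 : 0 < f 1 := hf_bij.mapsTo h1mem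
  refine ⟨max (g M) (2 * f 1), fun y hy => ?_⟩
  have hy1 : g M ≤ y := le_trans (le_max_left _ _) hy
  have hy2 : 2 * f 1 ≤ y := le_trans (le_max_right _ _) hy
  have hy0 : 0 < y := lt_of_lt_of_le hgM hy1
  have hymem : y ∈ Set.Ioi (0:ℝ) := hy0
  obtain ⟨hg'mem, hg'eq⟩ := hg' y hymem
  obtain ⟨hf'mem, hf'eq⟩ := hf' y hymem
  set u : ℝ := g' y with hu
  have hu0 : 0 < u := hg'mem
  have huM : M ≤ u := by
    refine (hg_mono.le_iff_le hMmem hg'mem).mp ?_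
    rw [hg'eq]; exact hy1
  have hu2 : (2:ℝ) ≤ u := le_trans (le_max_right _ _) huM
  have hu1 : (1:ℝ) < u := lt_of_lt_of_le one_lt_two hu2
  -- lower bound : u ≤ f' y
  have hlow : u ≤ f' y := by
    refine (hf_mono.le_iff_le hg'mem hf'mem).mp ?_
    rw [hf'eq]
    calc f u ≤ g u := hle u hg'mem
      _ = y := hg'eq
  -- f u > (1 - δ) * y
  have hfu : (1 - δ) * y < f u := by
    have hd := hX u (le_trans (le_max_left _ _) huM)
    rw [Real.dist_eq] at hd
    have h2 : 1 - δ < f u / g u := by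
      have := abs_lt.mp hd
      linarith [this.1]
    rw [hg'eq] at h2
    calc (1 - δ) * y < (f u / y) * y := mul_lt_mul_of_pos_right h2 hy0
      _ = f u := by field_simp
  -- convexity estimate
  set z : ℝ := (1 + ε') * u with hzdef
  have huz : u < z := by nlinarith
  have hzmem : z ∈ Set.Ioi (0:ℝ) := lt_trans hu0 huz
  have hslope := hconv.slope_mono_adjacent h1mem hzmem hu1 huz
  have hfu1 : f 1 ≤ f u := (hf_mono.le_iff_le h1mem hg'mem).mpr (le_of_lt hu1)
  have hzu : z - u = ε' * u := by rw [hzdef]; ring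
  have hkey : ε' * (f u - f 1) ≤ f z - f u := by
    have hden1 : (0:ℝ) < u - 1 := by linarith
    have hden2 : (0:ℝ) < z - u := by linarith
    have h3 : (f u - f 1) / (u - 1) * (z - u) ≤ f z - f u := by
      have := mul_le_mul_of_nonneg_right hslope (le_of_lt hden2)
      rwa [div_mul_cancel₀ _ (ne_of_gt hden2)] at this
    calc ε' * (f u - f 1) = (f u - f 1) / (u - 1) * (ε' * (u - 1)) := by
          field_simp
      _ ≤ (f u - f 1) / (u - 1) * (z - u) := by
          apply mul_le_mul_of_nonneg_left _ (div_nonneg (by linarith) (by linarith))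
          rw [hzu]; nlinarith
      _ ≤ f z - f u := h3
  -- conclude f z > y
  have hδval : (1 + ε') * δ = ε' / 2 := by
    rw [hδdef]; field_simp
  have hfz : y < f z := by nlinarith
  have hup : f' y ≤ z := by
    refine (hf_mono.le_iff_le hf'mem hzmem).mp ?_
    rw [hf'eq]; exact le_of_lt hfz
  -- finish
  have hratio_lo : 1 ≤ f' y / u := (one_le_div hu0).mpr hlow
  have hratio_hi : f' y / u ≤ 1 + ε' := by
    rw [div_le_iff₀ hu0]; rw [hzdef] at hup; linarith
  rw [Real.dist_eq, abs_of_nonneg (by linarith)]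
  have : ε' < ε := by rw [hε'def]; linarith
  simp only [hu] at hratio_hi ⊢
  linarith
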